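/- For the two-state symmetric telegraph noise (w takes values ±w₀, with symmetric switching rate γ and stationary initial distribution (1/2, 1/2)), the free (no-pulse) decoherence function is ⟨x(t)⟩ = e^{−γt}(cosh(Ωt) + (γ/Ω) sinh(Ωt)) with Ω = √(γ² − w₀²), which equals the sum of components of exp((Γ + iW)t) y(0). -/

import Mathlib

open Matrix Finset

lemma diag_fin_two_aux (a b : ℂ) : Matrix.diagonal ![a, b] = !![a, 0; 0, b] := by
  ext i j
  fin_cases i <;> fin_cases j <;> simp [Matrix.diagonal_apply]

set_option maxHeartbeats 1600000 in
/-- For the symmetric two-state telegraph noise (`w = ±w₀`, switching rate `γ`,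
stationary initial distribution `(1/2, 1/2)`), the free decoherence function is
`e^{-γt}(cosh(Ωt) + (γ/Ω) sinh(Ωt))` with `Ω² = γ² - w₀²`. -/
theorem two_state_telegraph_free_decoherence
    (γ w₀ : ℝ) (hγ : 0 < γ)
    (Ω : ℂ) (hΩ : Ω ^ 2 = (γ : ℂ) ^ 2 - (w₀ : ℂ) ^ 2) (hΩne : Ω ≠ 0)
    (t : ℝ) :
    ∑ j, ((NormedSpace.exp
        (t • ((!![(-γ : ℂ), γ; γ, -γ]) + Complex.I • (Matrix.diagonal ![(w₀ : ℂ), -w₀])))).mulVec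
        ![1/2, 1/2]) j
      = Complex.exp (-(γ : ℂ) * t) *
        (Complex.cosh (Ω * t) + ((γ : ℂ) / Ω) * Complex.sinh (Ω * t)) := by
  have hγ' : (γ : ℂ) ≠ 0 := Complex.ofReal_ne_zero.2 hγ.ne'
  set U : Matrix (Fin 2) (Fin 2) ℂ :=
    !![(γ : ℂ), γ; Ω - Complex.I * w₀, -Ω - Complex.I * w₀] with hUdef
  set V : Matrix (Fin 2) (Fin 2) ℂ :=
    !![(Ω + Complex.I * w₀) / (2 * γ * Ω), (γ : ℂ) / (2 * γ * Ω);
       (Ω - Complex.I * w₀) / (2 * γ * Ω), -(γ : ℂ) / (2 * γ * Ω)] with hVdef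
  have hUV : U * V = 1 := by
    ext i j
    fin_cases i <;> fin_cases j <;>
      simp [hUdef, hVdef, Matrix.mul_apply, Fin.sum_univ_two, Matrix.one_apply]
    all_goals field_simp
    all_goals ring
  have hVU : V * U = 1 := by
    ext i j
    fin_cases i <;> fin_cases j <;>
      simp [hUdef, hVdef, Matrix.mul_apply, Fin.sum_univ_two, Matrix.one_apply]
    all_goals field_simp
    all_goals ring
  set u : (Matrix (Fin 2) (Fin 2) ℂ)ˣ := ⟨U, V, hUV, hVU⟩ with hu
  set D : Matrix (Fin 2) (Fin 2) ℂ :=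
    Matrix.diagonal ![(t : ℂ) * (-γ + Ω), (t : ℂ) * (-γ - Ω)] with hDdef
  have hM : (t • ((!![(-γ : ℂ), γ; γ, -γ]) + Complex.I • (Matrix.diagonal ![(w₀ : ℂ), -w₀])))
      = U * D * V := by
    rw [hDdef, diag_fin_two_aux, diag_fin_two_aux]
    ext i j
    fin_cases i <;> fin_cases j <;>
      simp [hUdef, hVdef, Matrix.mul_apply, Fin.sum_univ_two, Complex.real_smul]
    all_goals field_simp
    all_goals try ring
    all_goals linear_combination -2*(t:ℂ)*Ω * hΩ + 2*(t:ℂ)*Ω*(w₀:ℂ)^2 * Complex.I_sq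
  have hexpM : NormedSpace.exp (U * D * V) = U * NormedSpace.exp D * V :=
    Matrix.exp_units_conj u D
  have hexp : NormedSpace.exp (![(t : ℂ) * (-γ + Ω), (t : ℂ) * (-γ - Ω)])
      = ![Complex.exp ((t : ℂ) * (-γ + Ω)), Complex.exp ((t : ℂ) * (-γ - Ω))] := by
    funext i
    fin_cases i <;> simp [Pi.coe_exp, ← Complex.exp_eq_exp_ℂ]
  rw [hM, hexpM, hDdef, Matrix.exp_diagonal, hexp, diag_fin_two_aux]
  have h1 : Complex.exp (-(γ:ℂ) * t) * Complex.exp (Ω * t) = Complex.exp ((t:ℂ) * (-γ + Ω)) := by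
    rw [← Complex.exp_add]; ring_nf
  have h2 : Complex.exp (-(γ:ℂ) * t) * Complex.exp (-(Ω * t)) =
      Complex.exp ((t:ℂ) * (-γ - Ω)) := by
    rw [← Complex.exp_add]; ring_nf
  have hc : Complex.exp (-(γ:ℂ) * t) * Complex.cosh (Ω * t)
      = (Complex.exp ((t:ℂ) * (-γ + Ω)) + Complex.exp ((t:ℂ) * (-γ - Ω))) / 2 := by
    linear_combination (Complex.exp (-(γ:ℂ) * t) / 2) * Complex.two_cosh (Ω * t)
      + (1/2) * h1 + (1/2) * h2
  have hs : Complex.exp (-(γ:ℂ) * t) * Complex.sinh (Ω * t)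
      = (Complex.exp ((t:ℂ) * (-γ + Ω)) - Complex.exp ((t:ℂ) * (-γ - Ω))) / 2 := by
    linear_combination (Complex.exp (-(γ:ℂ) * t) / 2) * Complex.two_sinh (Ω * t)
      + (1/2) * h1 - (1/2) * h2
  set A := Complex.exp ((t:ℂ) * (-γ + Ω)) with hA
  set B := Complex.exp ((t:ℂ) * (-γ - Ω)) with hB
  have hrhs : Complex.exp (-(γ:ℂ) * t) *
      (Complex.cosh (Ω * t) + ((γ : ℂ) / Ω) * Complex.sinh (Ω * t))
      = (A + B) / 2 + ((γ:ℂ)/Ω) * ((A - B) / 2) := by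
    linear_combination hc + ((γ:ℂ)/Ω) * hs
  rw [hrhs]
  simp [hUdef, hVdef, Matrix.mulVec, Matrix.mul_apply, dotProduct,
    Fin.sum_univ_two, smul_eq_mul]
  field_simp
  linear_combination (A - B) * hΩ - ((A - B)*(w₀:ℂ)^2) * Complex.I_sq
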